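/- Let H be a finite simple graph on n vertices with maximum degree at most 2, so every connected component of H is a simple path or a simple cycle. Let p_{3↓} (respectively, p_{4↑}) be the total number of vertices in the path components of H of order at most 3 (respectively, at least 4), let c_3 be the total number of vertices in components that are cycles of order exactly 3, and let c_{4,6↑} be the total number of vertices in components that are cycles of order exactly 4 or at least 6. Then ψ_4(H) ≤ (2/5)·n − (2/5)·(p_{3↓} + c_3) − (3/20)·p_{4↑} − (1/15)·c_{4,6↑}. -/

import Mathlib

open SimpleGraph

/-- `G` contains a path of order `k` (i.e., with `k` vertices). -/
def HasPathOfOrder {V : Type*} (G : SimpleGraph V) (k : ℕ) : Prop :=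
  ∃ (u v : V) (w : G.Walk u v), w.IsPath ∧ w.length + 1 = k

/-- `F` is a `k`-path vertex cover of `G`: the subgraph induced on the
complement of `F` contains no path of order `k`. -/
def IsPathVertexCover {V : Type*} (G : SimpleGraph V) (k : ℕ) (F : Finset V) : Prop :=
  ¬ HasPathOfOrder (G.induce ((↑F : Set V)ᶜ)) k

/-- `psi G k` is the minimum cardinality of a `k`-path vertex cover of `G`. -/
noncomputable def psi {V : Type*} [Fintype V] (G : SimpleGraph V) (k : ℕ) : ℕ :=
  sInf {n | ∃ F : Finset V, IsPathVertexCover G k F ∧ F.card = n}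


namespace PVC
open Finset
open scoped Classical

universe u
variable {V : Type u}

/-- quadruple-free: no path on 4 vertices avoiding F -/
def QFree (G : SimpleGraph V) (F : Finset V) : Prop :=
  ¬ ∃ a b c d : V, a ∉ F ∧ b ∉ F ∧ c ∉ F ∧ d ∉ F ∧
    a ≠ b ∧ a ≠ c ∧ a ≠ d ∧ b ≠ c ∧ b ≠ d ∧ c ≠ d ∧
    G.Adj a b ∧ G.Adj b c ∧ G.Adj c d

lemma quad_of_hasPath {G : SimpleGraph V} (h : ∃ (u v : V) (w : G.Walk u v), w.IsPath ∧ w.length + 1 = 4) :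
    ∃ a b c d : V, a ≠ b ∧ a ≠ c ∧ a ≠ d ∧ b ≠ c ∧ b ≠ d ∧ c ≠ d ∧
      G.Adj a b ∧ G.Adj b c ∧ G.Adj c d := by
  obtain ⟨u, v, w, hp, hl⟩ := h
  have hlen : w.support.length = 4 := by
    rw [SimpleGraph.Walk.length_support]; omega
  have hchain := w.isChain_adj_support
  have hnd : w.support.Nodup := (SimpleGraph.Walk.isPath_def w).mp hp
  rcases hs : w.support with _ | ⟨a, _ | ⟨b, _ | ⟨c, _ | ⟨d, _ | ⟨e, l⟩⟩⟩⟩⟩ <;>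
    rw [hs] at hlen <;> simp at hlen
  rw [hs] at hchain hnd
  simp at hchain hnd
  exact ⟨a, b, c, d, hnd.1.1, hnd.1.2.1, hnd.1.2.2, hnd.2.1.1, hnd.2.1.2, hnd.2.2,
    hchain.1, hchain.2.1, hchain.2.2⟩

lemma closed_mem' {G : SimpleGraph V} {S : Set V} (hS : ∀ x ∈ S, ∀ y, G.Adj x y → y ∈ S)
    {v u : V} (hv : v ∈ S) (h : G.Reachable v u) : u ∈ S := by
  obtain ⟨w⟩ := h
  induction w with
  | nil => exact hv
  | cons h p ih => exact ih (hS _ hv _ h)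

variable [Fintype V] [DecidableEq V]

noncomputable def csize (G : SimpleGraph V) (K : G.ConnectedComponent) : ℕ :=
  Set.ncard {u | G.connectedComponentMk u = K}

def isCyc (G : SimpleGraph V) [DecidableRel G.Adj] (K : G.ConnectedComponent) : Prop :=
  ∀ u, G.connectedComponentMk u = K → G.degree u = 2

noncomputable def g (G : SimpleGraph V) [DecidableRel G.Adj] (K : G.ConnectedComponent) : ℕ :=
  if isCyc G K then (if csize G K = 3 then 0 else (csize G K + 3) / 4)
  else csize G K / 4

noncomputable def Phi (G : SimpleGraph V) [DecidableRel G.Adj] : ℕ :=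
  ∑ K : G.ConnectedComponent, g G K

variable {G : SimpleGraph V} [DecidableRel G.Adj]

lemma csize_eq_card (K : G.ConnectedComponent) :
    csize G K = (univ.filter (fun v => G.connectedComponentMk v = K)).card := by
  rw [csize, Set.ncard_eq_toFinset_card', Set.toFinset_setOf]

lemma le_csize {K : G.ConnectedComponent} {t : Finset V}
    (h : ∀ x ∈ t, G.connectedComponentMk x = K) : t.card ≤ csize G K := by
  rw [csize_eq_card]
  exact Finset.card_le_card (fun x hx => by simp only [mem_filter, mem_univ, true_and]; exact h x hx)

lemma csize_le_of_closed {K : G.ConnectedComponent} {T : Finset V}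
    (hclosed : ∀ x ∈ (T : Set V), ∀ y, G.Adj x y → y ∈ (T : Set V))
    {v : V} (hv : v ∈ T) (hvK : G.connectedComponentMk v = K) :
    csize G K ≤ T.card := by
  rw [csize_eq_card]
  apply Finset.card_le_card
  intro x hx
  simp only [Finset.mem_filter, Finset.mem_univ, true_and] at hx
  have : G.Reachable v x := (ConnectedComponent.eq).mp (hvK.trans hx.symm)
  exact closed_mem' hclosed hv this

lemma sum_csize : ∑ K : G.ConnectedComponent, csize G K = Fintype.card V := by
  have := Finset.card_eq_sum_card_fiberwise
    (f := G.connectedComponentMk) (s := univ) (t := univ) (fun x _ => mem_univ _)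
  rw [← Finset.card_univ, this]
  refine Finset.sum_congr rfl fun K _ => ?_
  rw [csize_eq_card]

lemma ncard_eq_sum (Q : G.ConnectedComponent → Prop) :
    Set.ncard {v | Q (G.connectedComponentMk v)} =
      ∑ K : G.ConnectedComponent, if Q K then csize G K else 0 := by
  rw [Set.ncard_eq_toFinset_card', Set.toFinset_setOf]
  rw [Finset.card_eq_sum_card_fiberwise
    (f := G.connectedComponentMk) (t := univ) (fun x _ => mem_univ _)]
  refine Finset.sum_congr rfl fun K _ => ?_
  by_cases hQ : Q K
  · rw [if_pos hQ]
    have h1 : (Finset.filter (fun a => G.connectedComponentMk a = K)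
        (Finset.filter (fun v => Q (G.connectedComponentMk v)) Finset.univ)) =
        Finset.filter (fun a => G.connectedComponentMk a = K) Finset.univ := by
      ext v
      simp only [Finset.mem_filter, Finset.mem_univ, true_and]
      exact ⟨fun h => h.2, fun h => ⟨h ▸ hQ, h⟩⟩
    rw [h1, csize_eq_card]
  · rw [if_neg hQ, Finset.filter_filter]
    rw [Finset.card_eq_zero, Finset.filter_eq_empty_iff]
    rintro v _ ⟨hq, hk⟩
    exact hQ (hk ▸ hq)

omit [Fintype V] [DecidableEq V] in
lemma sum_div_le {ι : Type*} (s : Finset ι) (f : ι → ℕ) (k : ℕ) :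
    ∑ x ∈ s, f x / k ≤ (∑ x ∈ s, f x) / k := by
  induction s using Finset.cons_induction with
  | empty => simp
  | cons a s ha ih =>
      rw [Finset.sum_cons, Finset.sum_cons]
      calc f a / k + ∑ x ∈ s, f x / k ≤ f a / k + (∑ x ∈ s, f x) / k := by omega
        _ ≤ _ := Nat.add_div_le_add_div _ _ _


section Main
variable [Fintype V] [DecidableEq V] {G : SimpleGraph V} [DecidableRel G.Adj]

lemma walk_lift {G : SimpleGraph V} {S : Set V} {x y : V} (w : G.Walk x y)
    (h : ∀ z ∈ w.support, z ∈ S) :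
    (G.induce S).Reachable ⟨x, h x w.start_mem_support⟩ ⟨y, h y w.end_mem_support⟩ := by
  induction w with
  | nil => rfl
  | @cons a b c hadj p ih =>
      have hb : b ∈ S := h b (by simp)
      have h' : ∀ z ∈ p.support, z ∈ S := fun z hz => h z (by simp [hz])
      exact Reachable.trans
        (SimpleGraph.Adj.reachable (by simpa using hadj : (G.induce S).Adj ⟨a, _⟩ ⟨b, hb⟩))
        (ih h')

lemma degree_induce_le {S : Set V} (v : ↥S) [Fintype ((G.induce S).neighborSet v)]
    [Fintype (G.neighborSet v.val)] :
    (G.induce S).degree v ≤ G.degree v.val := by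
  have hsub : ((G.induce S).neighborFinset v).image Subtype.val ⊆ G.neighborFinset v.val := by
    intro y hy
    simp only [Finset.mem_image, SimpleGraph.mem_neighborFinset] at hy ⊢
    obtain ⟨y', hy', rfl⟩ := hy
    simpa using hy'
  calc (G.induce S).degree v = ((G.induce S).neighborFinset v).card :=
        (SimpleGraph.card_neighborFinset_eq_degree _ _).symm
    _ = (((G.induce S).neighborFinset v).image Subtype.val).card :=
        (Finset.card_image_of_injective _ Subtype.val_injective).symm
    _ ≤ (G.neighborFinset v.val).card := Finset.card_le_card hsub
    _ = G.degree v.val := SimpleGraph.card_neighborFinset_eq_degree _ _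

lemma neighborFinset_induce_eq {S : Set V} (v : ↥S) [Fintype ((G.induce S).neighborSet v)]
    [Fintype (G.neighborSet v.val)] (hall : ∀ y, G.Adj v.val y → y ∈ S) :
    ((G.induce S).neighborFinset v).image Subtype.val = G.neighborFinset v.val := by
  apply Finset.Subset.antisymm
  · intro y hy
    simp only [Finset.mem_image, SimpleGraph.mem_neighborFinset] at hy ⊢
    obtain ⟨y', hy', rfl⟩ := hy
    simpa using hy'
  · intro y hy
    simp only [SimpleGraph.mem_neighborFinset] at hy
    refine Finset.mem_image.mpr ⟨⟨y, hall y hy⟩, ?_, rfl⟩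
    simpa using hy

lemma degree_induce_eq {S : Set V} (v : ↥S) [Fintype ((G.induce S).neighborSet v)]
    [Fintype (G.neighborSet v.val)] (hall : ∀ y, G.Adj v.val y → y ∈ S) :
    (G.induce S).degree v = G.degree v.val := by
  rw [← SimpleGraph.card_neighborFinset_eq_degree, ← SimpleGraph.card_neighborFinset_eq_degree,
    ← neighborFinset_induce_eq v hall, Finset.card_image_of_injective _ Subtype.val_injective]

/-- the inclusion homomorphism -/
def incl (G : SimpleGraph V) (S : Set V) : G.induce S →g G :=
  ⟨Subtype.val, fun {a b} h => by simpa using h⟩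

lemma reach_lift {S : Set V} {v w : ↥S} (hS : ∀ z, G.Reachable v.val z → z ∈ S)
    (h : G.Reachable v.val w.val) : (G.induce S).Reachable v w := by
  obtain ⟨p⟩ := h
  have hsupp : ∀ z ∈ p.support, z ∈ S := fun z hz => hS z ⟨p.takeUntil z hz⟩
  exact walk_lift p hsupp

lemma phi_drop (D : Finset V)
    (hDne : D.Nonempty) (K₀ : G.ConnectedComponent)
    (hdeg : ∀ v, G.degree v ≤ 2)
    (hD : ∀ x ∈ D, G.connectedComponentMk x = K₀) :
    Phi (G.induce {v : V | v ∉ D}) + g G K₀ ≤ Phi G + (csize G K₀ - D.card) / 4 := by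
  set S : Set V := {v | v ∉ D} with hS
  set G' := G.induce S with hG'
  set π : G'.ConnectedComponent → G.ConnectedComponent :=
    ConnectedComponent.map (incl G S) with hπ
  have hmapmk : ∀ v : ↥S, π ((G').connectedComponentMk v) = G.connectedComponentMk v.val :=
    fun v => ConnectedComponent.map_mk _ _
  -- vertices outside K₀ are in S
  have hmemS : ∀ {z : V}, G.connectedComponentMk z ≠ K₀ → z ∈ S := by
    intro z hz
    simp only [hS, Set.mem_setOf_eq]
    intro hzD
    exact hz (hD z hzD)
  -- reachability from a non-K₀ vertex stays out of K₀
  have hreach : ∀ {v : ↥S}, G.connectedComponentMk v.val ≠ K₀ →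
      ∀ z, G.Reachable v.val z → z ∈ S := by
    intro v hv z hz
    apply hmemS
    rw [← (ConnectedComponent.eq.mpr hz : G.connectedComponentMk v.val = _)] at *
    exact hv
  -- neighbors of non-K₀ vertices are in S
  have hnbr : ∀ (v : ↥S), G.connectedComponentMk v.val ≠ K₀ →
      ∀ y, G.Adj v.val y → y ∈ S := by
    intro v hv y hy
    exact hreach hv y hy.reachable
  -- (C) csize preserved off the fiber of K₀
  have hcsize : ∀ K' : G'.ConnectedComponent, π K' ≠ K₀ → csize G' K' = csize G (π K') := by
    intro K' hK'
    obtain ⟨v', hv'⟩ : ∃ v', G'.connectedComponentMk v' = K' := K'.exists_rep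
    have hv'K : G.connectedComponentMk v'.val = π K' := by rw [← hv', hmapmk]
    have himage : {u | G.connectedComponentMk u = π K'} =
        Subtype.val '' {u' : ↥S | G'.connectedComponentMk u' = K'} := by
      ext u
      constructor
      · intro hu
        have huS : u ∈ S := hmemS (by rw [hu]; exact hK')
        have hr : G.Reachable u v'.val := ConnectedComponent.eq.mp (hu.trans hv'K.symm)
        have hune : G.connectedComponentMk u ≠ K₀ := by
          rw [Set.mem_setOf_eq] at hu; rw [hu]; exact hK'
        have : G'.Reachable (⟨u, huS⟩ : ↥S) v' := reach_lift (hreach (v := ⟨u, huS⟩) hune) hr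
        exact ⟨⟨u, huS⟩, by rw [Set.mem_setOf_eq, ConnectedComponent.eq.mpr this, hv'], rfl⟩
      · rintro ⟨u', hu', rfl⟩
        rw [Set.mem_setOf_eq, ← hmapmk u', hu']
    rw [csize, csize, himage, Set.ncard_image_of_injective _ Subtype.val_injective]
  -- (D) cycle-ness preserved off the fiber
  have hcyc : ∀ K' : G'.ConnectedComponent, π K' ≠ K₀ → (isCyc G' K' ↔ isCyc G (π K')) := by
    intro K' hK'
    have hsupp : {u | G.connectedComponentMk u = π K'} =
        Subtype.val '' {u' : ↥S | G'.connectedComponentMk u' = K'} := by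
      -- same as in hcsize; re-derive
      obtain ⟨v', hv'⟩ : ∃ v', G'.connectedComponentMk v' = K' := K'.exists_rep
      have hv'K : G.connectedComponentMk v'.val = π K' := by rw [← hv', hmapmk]
      ext u
      constructor
      · intro hu
        have huS : u ∈ S := hmemS (by rw [hu]; exact hK')
        have hr : G.Reachable u v'.val := ConnectedComponent.eq.mp (hu.trans hv'K.symm)
        have hune : G.connectedComponentMk u ≠ K₀ := by
          rw [Set.mem_setOf_eq] at hu; rw [hu]; exact hK'
        have : G'.Reachable (⟨u, huS⟩ : ↥S) v' := reach_lift (hreach (v := ⟨u, huS⟩) hune) hr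
        exact ⟨⟨u, huS⟩, by rw [Set.mem_setOf_eq, ConnectedComponent.eq.mpr this, hv'], rfl⟩
      · rintro ⟨u', hu', rfl⟩
        rw [Set.mem_setOf_eq, ← hmapmk u', hu']
    constructor
    · intro h u hu
      have : u ∈ Subtype.val '' {u' : ↥S | G'.connectedComponentMk u' = K'} := by
        rw [← hsupp]; exact hu
      obtain ⟨u', hu', rfl⟩ := this
      have hdeq : G'.degree u' = G.degree u'.val :=
        degree_induce_eq u' (hnbr u' (by rw [← hmapmk u', hu']; exact fun hh => hK' hh))
      rw [← hdeq]
      exact h u' hu'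
    · intro h u' hu'
      have huK : G.connectedComponentMk u'.val = π K' := by rw [← hmapmk u', hu']
      have hdeq : G'.degree u' = G.degree u'.val :=
        degree_induce_eq u' (hnbr u' (by rw [huK]; exact hK'))
      rw [hdeq]
      exact h u'.val huK
  have hg : ∀ K' : G'.ConnectedComponent, π K' ≠ K₀ → g G' K' = g G (π K') := by
    intro K' hK'
    rw [g, g, hcsize K' hK']
    by_cases hc : isCyc G (π K')
    · rw [if_pos hc, if_pos ((hcyc K' hK').mpr hc)]
    · rw [if_neg hc, if_neg (fun hh => hc ((hcyc K' hK').mp hh))]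
  -- (E) pieces are not cycles
  have hpiece : ∀ K' : G'.ConnectedComponent, π K' = K₀ → ¬ isCyc G' K' := by
    intro K' hK' hcyc'
    obtain ⟨v', hv'⟩ : ∃ v', G'.connectedComponentMk v' = K' := K'.exists_rep
    set T : Set V := Subtype.val '' {u' : ↥S | G'.connectedComponentMk u' = K'} with hT
    have hclosed : ∀ x ∈ T, ∀ y, G.Adj x y → y ∈ T := by
      rintro x ⟨x', hx', rfl⟩ y hxy
      have hdeg2 : G'.degree x' = 2 := hcyc' x' hx'
      have hle : G'.degree x' ≤ G.degree x'.val := degree_induce_le x'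
      have hge : G.degree x'.val ≤ 2 := hdeg x'.val
      have hdeq : G.degree x'.val = 2 := le_antisymm hge (hdeg2 ▸ hle)
      have hsub : ((G'.neighborFinset x').image Subtype.val) ⊆ G.neighborFinset x'.val := by
        intro y hy
        simp only [Finset.mem_image, SimpleGraph.mem_neighborFinset] at hy ⊢
        obtain ⟨y', hy', rfl⟩ := hy
        exact (hy' : G.Adj x'.val y'.val)
      have hcards : (G.neighborFinset x'.val).card ≤
          ((G'.neighborFinset x').image Subtype.val).card := by
        rw [Finset.card_image_of_injective _ Subtype.val_injective]
        rw [SimpleGraph.card_neighborFinset_eq_degree, SimpleGraph.card_neighborFinset_eq_degree]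
        omega
      have heq := Finset.eq_of_subset_of_card_le hsub hcards
      have hy : y ∈ (G'.neighborFinset x').image Subtype.val := by
        rw [heq]; exact (SimpleGraph.mem_neighborFinset _ _ _).mpr hxy
      obtain ⟨y', hy', rfl⟩ := Finset.mem_image.mp hy
      refine ⟨y', ?_, rfl⟩
      rw [Set.mem_setOf_eq, ← hx']
      exact ConnectedComponent.connectedComponentMk_eq_of_adj
        ((SimpleGraph.mem_neighborFinset _ _ _).mp hy').symm
    obtain ⟨d, hd⟩ := hDne
    have hvT : v'.val ∈ T := ⟨v', hv', rfl⟩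
    have hvK : G.connectedComponentMk v'.val = K₀ := by rw [← hmapmk v', hv', hK']
    have hr : G.Reachable v'.val d := ConnectedComponent.eq.mp (hvK.trans (hD d hd).symm)
    have : d ∈ T := closed_mem' hclosed hvT hr
    obtain ⟨d', _, hdval⟩ := this
    exact (hdval ▸ d'.prop : (d : V) ∈ S) hd
  -- partition of components of G'
  set restF : Finset G'.ConnectedComponent := univ.filter (fun K' => ¬ (π K' = K₀)) with hrestF
  set piecesF : Finset G'.ConnectedComponent := univ.filter (fun K' => π K' = K₀) with hpiecesF
  -- injectivity of π on restF
  have hinj : ∀ x ∈ restF, ∀ y ∈ restF, π x = π y → x = y := by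
    intro x hx y hy hxy
    simp only [hrestF, mem_filter, mem_univ, true_and] at hx hy
    obtain ⟨vx, hvx⟩ : ∃ v, G'.connectedComponentMk v = x := x.exists_rep
    obtain ⟨vy, hvy⟩ : ∃ v, G'.connectedComponentMk v = y := y.exists_rep
    have h1 : G.connectedComponentMk vx.val = π x := by rw [← hvx, hmapmk]
    have h2 : G.connectedComponentMk vy.val = π y := by rw [← hvy, hmapmk]
    have hr : G.Reachable vx.val vy.val := ConnectedComponent.eq.mp (by rw [h1, h2, hxy])
    have : G'.Reachable vx vy := reach_lift (hreach (by rw [h1]; exact hx)) hr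
    rw [← hvx, ← hvy, ConnectedComponent.eq.mpr this]
  -- image of restF under π
  have himg : restF.image π = univ.filter (fun K => ¬ (K = K₀)) := by
    ext K
    simp only [Finset.mem_image, hrestF, mem_filter, mem_univ, true_and]
    constructor
    · rintro ⟨K', hK', rfl⟩; exact hK'
    · intro hK
      obtain ⟨v, hv⟩ : ∃ v, G.connectedComponentMk v = K := K.exists_rep
      have hvS : v ∈ S := hmemS (by rw [hv]; exact hK)
      refine ⟨G'.connectedComponentMk ⟨v, hvS⟩, ?_, ?_⟩ <;>
        rw [hmapmk ⟨v, hvS⟩] <;> simp only [hv]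
      exact hK
  -- sum of g over restF
  have hsum_g : ∑ K' ∈ restF, g G' K' = ∑ K ∈ univ.filter (fun K => ¬ (K = K₀)), g G K := by
    rw [← himg, Finset.sum_image hinj]
    refine Finset.sum_congr rfl fun K' hK' => ?_
    simp only [hrestF, mem_filter, mem_univ, true_and] at hK'
    exact hg K' hK'
  -- sum of csize over restF
  have hsum_c : ∑ K' ∈ restF, csize G' K' = ∑ K ∈ univ.filter (fun K => ¬ (K = K₀)), csize G K := by
    rw [← himg, Finset.sum_image hinj]
    refine Finset.sum_congr rfl fun K' hK' => ?_
    simp only [hrestF, mem_filter, mem_univ, true_and] at hK'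
    exact hcsize K' hK'
  -- totals
  have htot' : ∑ K' ∈ piecesF, csize G' K' + ∑ K' ∈ restF, csize G' K' = Fintype.card ↥S := by
    rw [hpiecesF, hrestF, Finset.sum_filter_add_sum_filter_not, sum_csize]
  have htot : g G K₀ + ∑ K ∈ univ.filter (fun K => ¬ (K = K₀)), g G K = Phi G := by
    rw [Phi, ← Finset.sum_filter_add_sum_filter_not univ (fun K => K = K₀) (g G)]
    congr 1
    symm
    refine Finset.sum_eq_single_of_mem K₀ ?_ ?_
    · exact Finset.mem_filter.mpr ⟨mem_univ _, rfl⟩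
    · intro b hb hne
      exact absurd (Finset.mem_filter.mp hb).2 hne
  have htotc : csize G K₀ + ∑ K ∈ univ.filter (fun K => ¬ (K = K₀)), csize G K
      = Fintype.card V := by
    rw [← sum_csize (G := G), ← Finset.sum_filter_add_sum_filter_not univ (fun K => K = K₀)]
    congr 1
    symm
    refine Finset.sum_eq_single_of_mem K₀ ?_ ?_
    · exact Finset.mem_filter.mpr ⟨mem_univ _, rfl⟩
    · intro b hb hne
      exact absurd (Finset.mem_filter.mp hb).2 hne
  have hcardS : Fintype.card ↥S = Fintype.card V - D.card := by
    have h1 : S.ncard = Fintype.card ↥S := by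
      rw [Set.ncard_eq_toFinset_card', Set.toFinset_card]
    have h2 : S = ((univ \ D : Finset V) : Set V) := by
      ext v; simp [hS]
    rw [← h1, h2, Set.ncard_coe_finset, Finset.card_sdiff_of_subset (Finset.subset_univ D),
      Finset.card_univ]
  have hDle : D.card ≤ csize G K₀ := le_csize hD
  have hcsizele : csize G K₀ ≤ Fintype.card V := by
    have := htotc; omega
  have hpieces_sum : ∑ K' ∈ piecesF, csize G' K' = csize G K₀ - D.card := by
    omega
  -- final assembly
  have hsplit : Phi G' = ∑ K' ∈ piecesF, g G' K' + ∑ K' ∈ restF, g G' K' := by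
    rw [Phi, ← Finset.sum_filter_add_sum_filter_not univ (fun K' => π K' = K₀) (g G')]
  have hpg : ∑ K' ∈ piecesF, g G' K' ≤ (csize G K₀ - D.card) / 4 := by
    rw [← hpieces_sum]
    calc ∑ K' ∈ piecesF, g G' K' = ∑ K' ∈ piecesF, csize G' K' / 4 := by
          refine Finset.sum_congr rfl fun K' hK' => ?_
          simp only [hpiecesF, mem_filter, mem_univ, true_and] at hK'
          rw [g, if_neg (hpiece K' hK')]
      _ ≤ _ := sum_div_le _ _ _
  have hle : Phi G' ≤ (csize G K₀ - D.card) / 4 + ∑ K ∈ univ.filter (fun K => ¬ (K = K₀)), g G K := by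
    rw [hsplit, hsum_g]
    omega
  have hfinal : Phi G' + g G K₀ ≤ Phi G + (csize G K₀ - D.card) / 4 := by omega
  exact hfinal

lemma qlift {S : Set V} {F' : Finset ↥S} (hF' : QFree (G.induce S) F')
    {x1 x2 x3 x4 : V} (h1 : x1 ∈ S) (h2 : x2 ∈ S) (h3 : x3 ∈ S) (h4 : x4 ∈ S)
    (m1 : x1 ∉ F'.image Subtype.val) (m2 : x2 ∉ F'.image Subtype.val)
    (m3 : x3 ∉ F'.image Subtype.val) (m4 : x4 ∉ F'.image Subtype.val)
    (n12 : x1 ≠ x2) (n13 : x1 ≠ x3) (n14 : x1 ≠ x4) (n23 : x2 ≠ x3) (n24 : x2 ≠ x4)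
    (n34 : x3 ≠ x4) (a12 : G.Adj x1 x2) (a23 : G.Adj x2 x3) (a34 : G.Adj x3 x4) : False := by
  apply hF'
  refine ⟨⟨x1, h1⟩, ⟨x2, h2⟩, ⟨x3, h3⟩, ⟨x4, h4⟩, ?_, ?_, ?_, ?_, ?_, ?_, ?_, ?_, ?_, ?_,
    ?_, ?_, ?_⟩
  · exact fun h => m1 (Finset.mem_image.mpr ⟨_, h, rfl⟩)
  · exact fun h => m2 (Finset.mem_image.mpr ⟨_, h, rfl⟩)
  · exact fun h => m3 (Finset.mem_image.mpr ⟨_, h, rfl⟩)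
  · exact fun h => m4 (Finset.mem_image.mpr ⟨_, h, rfl⟩)
  · exact fun h => n12 (congrArg Subtype.val h)
  · exact fun h => n13 (congrArg Subtype.val h)
  · exact fun h => n14 (congrArg Subtype.val h)
  · exact fun h => n23 (congrArg Subtype.val h)
  · exact fun h => n24 (congrArg Subtype.val h)
  · exact fun h => n34 (congrArg Subtype.val h)
  · simpa using a12
  · simpa using a23
  · simpa using a34
end Main

lemma exists_cover (n : ℕ) :
    ∀ {V : Type u} [Fintype V] [DecidableEq V] (G : SimpleGraph V) [DecidableRel G.Adj],
      Fintype.card V ≤ n → (∀ v, G.degree v ≤ 2) →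
      ∃ F : Finset V, QFree G F ∧ F.card ≤ Phi G := by
  induction n with
  | zero =>
      intro V _ _ G _ hcard hdeg
      haveI : IsEmpty V := by
        rwa [Nat.le_zero, Fintype.card_eq_zero_iff] at hcard
      exact ⟨∅, fun ⟨a, _⟩ => IsEmpty.elim ‹_› a, Nat.zero_le _⟩
  | succ n IH =>
      intro V _ _ G _ hcard hdeg
      by_cases hq : ∃ a b c d : V, a ≠ b ∧ a ≠ c ∧ a ≠ d ∧ b ≠ c ∧ b ≠ d ∧ c ≠ d ∧
          G.Adj a b ∧ G.Adj b c ∧ G.Adj c d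
      · obtain ⟨a, b, c, d, nab, nac, nad, nbc, nbd, ncd, hab, hbc, hcd⟩ := hq
        set K₀ := G.connectedComponentMk a with hK₀
        have hbK : G.connectedComponentMk b = K₀ :=
          (ConnectedComponent.connectedComponentMk_eq_of_adj hab).symm
        have hcK : G.connectedComponentMk c = K₀ := by
          rw [← hbK]; exact (ConnectedComponent.connectedComponentMk_eq_of_adj hbc).symm
        have hdK : G.connectedComponentMk d = K₀ := by
          rw [← hcK]; exact (ConnectedComponent.connectedComponentMk_eq_of_adj hcd).symm
        have habcd : ({a, b, c, d} : Finset V).card = 4 := by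
          rw [Finset.card_insert_of_notMem (by simp [nab, nac, nad]),
            Finset.card_insert_of_notMem (by simp [nbc, nbd]),
            Finset.card_insert_of_notMem (by simp [ncd]), Finset.card_singleton]
        have hm4 : 4 ≤ csize G K₀ := by
          rw [← habcd]
          apply le_csize
          intro x hx
          simp only [Finset.mem_insert, Finset.mem_singleton] at hx
          rcases hx with rfl | rfl | rfl | rfl
          · rfl
          · exact hbK
          · exact hcK
          · exact hdK
        by_cases hcyc : isCyc G K₀
        · -- cycle case : delete a
          set D : Finset V := {a} with hD
          set S : Set V := {v : V | v ∉ D} with hSdef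
          set G' := G.induce S with hG'
          have hcard' : Fintype.card ↥S ≤ n := by
            have h1 : Fintype.card ↥S < Fintype.card V := by
              apply Fintype.card_subtype_lt (x := a)
              simp [hSdef, hD]
            omega
          have hdeg' : ∀ v : ↥S, G'.degree v ≤ 2 :=
            fun v => le_trans (degree_induce_le v) (hdeg v.val)
          obtain ⟨F', hF', hcardF'⟩ := IH G' hcard' hdeg'
          refine ⟨insert a (F'.image Subtype.val), ?_, ?_⟩
          · rintro ⟨x1, x2, x3, x4, hx1, hx2, hx3, hx4, n12, n13, n14, n23, n24, n34,
              a12, a23, a34⟩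
            have hS : ∀ {x : V}, x ∉ insert a (F'.image Subtype.val) → x ∈ S := by
              intro x hx
              simp only [hSdef, hD, Set.mem_setOf_eq, Finset.mem_singleton]
              intro h
              exact hx (h ▸ Finset.mem_insert_self _ _)
            have hm : ∀ {x : V}, x ∉ insert a (F'.image Subtype.val) →
                x ∉ F'.image Subtype.val :=
              fun hx h => hx (Finset.mem_insert_of_mem h)
            exact qlift hF' (hS hx1) (hS hx2) (hS hx3) (hS hx4) (hm hx1) (hm hx2) (hm hx3)
              (hm hx4) n12 n13 n14 n23 n24 n34 a12 a23 a34
          · have hc1 : (insert a (F'.image Subtype.val)).card ≤ F'.card + 1 := by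
              calc (insert a (F'.image Subtype.val)).card ≤ (F'.image Subtype.val).card + 1 :=
                    Finset.card_insert_le _ _
                _ ≤ F'.card + 1 := by
                    have := Finset.card_image_le (f := Subtype.val) (s := F')
                    omega
            have hdrop := phi_drop (G := G) D ⟨a, by simp [hD]⟩ K₀ hdeg
              (by intro x hx; simp only [hD, Finset.mem_singleton] at hx; rw [hx])
            have hgK : g G K₀ = (csize G K₀ + 3) / 4 := by
              rw [g, if_pos hcyc, if_neg (by omega)]
            have hDcard : D.card = 1 := by simp [hD]
            rw [hgK, hDcard] at hdrop
            have hdrop' : Phi G' + (csize G K₀ + 3) / 4 ≤ Phi G + (csize G K₀ - 1) / 4 := hdrop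
            have hPhi : Phi G' + 1 ≤ Phi G := by omega
            omega
        · -- path case
          have hpath : ∃ u, G.connectedComponentMk u = K₀ ∧ G.degree u ≤ 1 := by
            rw [isCyc] at hcyc
            push_neg at hcyc
            obtain ⟨u, hu, hne⟩ := hcyc
            exact ⟨u, hu, by have := hdeg u; omega⟩
          obtain ⟨u1, hu1K, hu1deg⟩ := hpath
          -- u2
          have hex2 : ∃ u2, G.Adj u1 u2 := by
            by_contra h
            push_neg at h
            have hclosed : ∀ x ∈ (({u1} : Finset V) : Set V), ∀ y, G.Adj x y →
                y ∈ (({u1} : Finset V) : Set V) := by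
              intro x hx y hxy
              simp only [Finset.coe_singleton, Set.mem_singleton_iff] at hx
              exact absurd (hx ▸ hxy) (h y)
            have := csize_le_of_closed hclosed (Finset.mem_singleton_self u1) hu1K
            simp only [Finset.card_singleton] at this
            omega
          obtain ⟨u2, h12⟩ := hex2
          have hAdj1 : ∀ y, G.Adj u1 y → y = u2 := by
            intro y hy
            have hsub : ({u2} : Finset V) ⊆ G.neighborFinset u1 := by
              simp [Finset.singleton_subset_iff, SimpleGraph.mem_neighborFinset, h12]
            have hcard1 : (G.neighborFinset u1).card ≤ 1 := by
              rw [SimpleGraph.card_neighborFinset_eq_degree]; exact hu1deg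
            have heq := Finset.eq_of_subset_of_card_le hsub (by simpa using hcard1)
            have : y ∈ G.neighborFinset u1 := (SimpleGraph.mem_neighborFinset _ _ _).mpr hy
            rw [← heq] at this
            simpa using this
          -- u3
          have hex3 : ∃ u3, G.Adj u2 u3 ∧ u3 ≠ u1 := by
            by_contra h
            push_neg at h
            have hclosed : ∀ x ∈ (({u1, u2} : Finset V) : Set V), ∀ y, G.Adj x y →
                y ∈ (({u1, u2} : Finset V) : Set V) := by
              intro x hx y hxy
              simp only [Finset.coe_insert, Finset.coe_singleton, Set.mem_insert_iff,
                Set.mem_singleton_iff] at hx ⊢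
              rcases hx with rfl | rfl
              · right; exact hAdj1 y hxy
              · by_cases hy1 : y = u1
                · left; exact hy1
                · exact absurd (h y hxy) hy1
            have := csize_le_of_closed hclosed (Finset.mem_insert_self u1 _) hu1K
            have hle2 : ({u1, u2} : Finset V).card ≤ 2 := by
              apply le_trans (Finset.card_insert_le _ _); simp
            omega
          obtain ⟨u3, h23, hn31⟩ := hex3
          have hn12 : u1 ≠ u2 := G.ne_of_adj h12
          have hn23 : u2 ≠ u3 := G.ne_of_adj h23
          have hAdj2 : ∀ y, G.Adj u2 y → y = u1 ∨ y = u3 := by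
            intro y hy
            have hsub : ({u1, u3} : Finset V) ⊆ G.neighborFinset u2 := by
              intro z hz
              simp only [Finset.mem_insert, Finset.mem_singleton] at hz
              rcases hz with rfl | rfl
              · exact (SimpleGraph.mem_neighborFinset _ _ _).mpr h12.symm
              · exact (SimpleGraph.mem_neighborFinset _ _ _).mpr h23
            have hcard2 : (G.neighborFinset u2).card ≤ 2 := by
              rw [SimpleGraph.card_neighborFinset_eq_degree]; exact hdeg u2
            have hc13 : ({u1, u3} : Finset V).card = 2 := by
              rw [Finset.card_insert_of_notMem (by simp [Ne.symm hn31]),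
                Finset.card_singleton]
            have heq := Finset.eq_of_subset_of_card_le hsub (by omega)
            have : y ∈ G.neighborFinset u2 := (SimpleGraph.mem_neighborFinset _ _ _).mpr hy
            rw [← heq] at this
            simpa using this
          -- u4
          have hex4 : ∃ u4, G.Adj u3 u4 ∧ u4 ≠ u2 := by
            by_contra h
            push_neg at h
            have hclosed : ∀ x ∈ (({u1, u2, u3} : Finset V) : Set V), ∀ y, G.Adj x y →
                y ∈ (({u1, u2, u3} : Finset V) : Set V) := by
              intro x hx y hxy
              simp only [Finset.coe_insert, Finset.coe_singleton, Set.mem_insert_iff,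
                Set.mem_singleton_iff] at hx ⊢
              rcases hx with rfl | rfl | rfl
              · right; left; exact hAdj1 y hxy
              · rcases hAdj2 y hxy with rfl | rfl
                · left; rfl
                · right; right; rfl
              · by_cases hy2 : y = u2
                · right; left; exact hy2
                · exact absurd (h y hxy) hy2
            have := csize_le_of_closed hclosed (Finset.mem_insert_self u1 _) hu1K
            have hle3 : ({u1, u2, u3} : Finset V).card ≤ 3 := by
              apply le_trans (Finset.card_insert_le _ _)
              have : ({u2, u3} : Finset V).card ≤ 2 := by
                apply le_trans (Finset.card_insert_le _ _); simp
              omega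
            omega
          obtain ⟨u4, h34, hn42⟩ := hex4
          have hn34 : u3 ≠ u4 := G.ne_of_adj h34
          have hn41 : u4 ≠ u1 := by
            intro h
            subst h
            exact hn23 (hAdj1 u3 h34.symm).symm
          have hAdj3 : ∀ y, G.Adj u3 y → y = u2 ∨ y = u4 := by
            intro y hy
            have hsub : ({u2, u4} : Finset V) ⊆ G.neighborFinset u3 := by
              intro z hz
              simp only [Finset.mem_insert, Finset.mem_singleton] at hz
              rcases hz with rfl | rfl
              · exact (SimpleGraph.mem_neighborFinset _ _ _).mpr h23.symm
              · exact (SimpleGraph.mem_neighborFinset _ _ _).mpr h34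
            have hcard3 : (G.neighborFinset u3).card ≤ 2 := by
              rw [SimpleGraph.card_neighborFinset_eq_degree]; exact hdeg u3
            have hc24 : ({u2, u4} : Finset V).card = 2 := by
              rw [Finset.card_insert_of_notMem (by simp [Ne.symm hn42]), Finset.card_singleton]
            have heq := Finset.eq_of_subset_of_card_le hsub (by omega)
            have : y ∈ G.neighborFinset u3 := (SimpleGraph.mem_neighborFinset _ _ _).mpr hy
            rw [← heq] at this
            simpa using this
          have hu2K : G.connectedComponentMk u2 = K₀ := by
            rw [← hu1K]
            exact (ConnectedComponent.connectedComponentMk_eq_of_adj h12).symm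
          have hu3K : G.connectedComponentMk u3 = K₀ := by
            rw [← hu2K]
            exact (ConnectedComponent.connectedComponentMk_eq_of_adj h23).symm
          have hu4K : G.connectedComponentMk u4 = K₀ := by
            rw [← hu3K]
            exact (ConnectedComponent.connectedComponentMk_eq_of_adj h34).symm
          have hn13 : u1 ≠ u3 := Ne.symm hn31
          have hn24 : u2 ≠ u4 := Ne.symm hn42
          have hn14 : u1 ≠ u4 := Ne.symm hn41
          set D : Finset V := {u1, u2, u3, u4} with hD
          have hDcard : D.card = 4 := by
            rw [hD, Finset.card_insert_of_notMem (by simp [hn12, hn13, hn14]),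
              Finset.card_insert_of_notMem (by simp [hn23, hn24]),
              Finset.card_insert_of_notMem (by simp [hn34]), Finset.card_singleton]
          set S : Set V := {v : V | v ∉ D} with hSdef
          set G' := G.induce S with hG'
          have hcard' : Fintype.card ↥S ≤ n := by
            have h1 : Fintype.card ↥S < Fintype.card V := by
              apply Fintype.card_subtype_lt (x := u1)
              simp [hSdef, hD]
            omega
          have hdeg' : ∀ v : ↥S, G'.degree v ≤ 2 :=
            fun v => le_trans (degree_induce_le v) (hdeg v.val)
          obtain ⟨F', hF', hcardF'⟩ := IH G' hcard' hdeg'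
          refine ⟨insert u4 (F'.image Subtype.val), ?_, ?_⟩
          · rintro ⟨x1, x2, x3, x4, hx1, hx2, hx3, hx4, n12, n13, n14, n23, n24, n34,
              a12, a23, a34⟩
            set T : Finset V := {u1, u2, u3} with hT
            have hstep : ∀ x y, x ∈ T → G.Adj x y →
                y ∉ insert u4 (F'.image Subtype.val) → y ∈ T := by
              intro x y hx hxy hyF
              have hy4 : y ≠ u4 := fun h => hyF (h ▸ Finset.mem_insert_self _ _)
              simp only [hT, Finset.mem_insert, Finset.mem_singleton] at hx ⊢
              rcases hx with rfl | rfl | rfl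
              · right; left; exact hAdj1 y hxy
              · rcases hAdj2 y hxy with rfl | rfl
                · left; rfl
                · right; right; rfl
              · rcases hAdj3 y hxy with rfl | rfl
                · right; left; rfl
                · exact absurd rfl hy4
            by_cases hall : x1 ∈ S ∧ x2 ∈ S ∧ x3 ∈ S ∧ x4 ∈ S
            · obtain ⟨hs1, hs2, hs3, hs4⟩ := hall
              have hm : ∀ {x : V}, x ∉ insert u4 (F'.image Subtype.val) →
                  x ∉ F'.image Subtype.val :=
                fun hx h => hx (Finset.mem_insert_of_mem h)
              exact qlift hF' hs1 hs2 hs3 hs4 (hm hx1) (hm hx2) (hm hx3) (hm hx4)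
                n12 n13 n14 n23 n24 n34 a12 a23 a34
            · -- some xi ∈ D, hence in T
              have hDT : ∀ {x : V}, x ∉ S → x ∉ insert u4 (F'.image Subtype.val) → x ∈ T := by
                intro x hxS hxF
                have hx4 : x ≠ u4 := fun h => hxF (h ▸ Finset.mem_insert_self _ _)
                simp only [hSdef, Set.mem_setOf_eq, not_not] at hxS
                simp only [hD, Finset.mem_insert, Finset.mem_singleton] at hxS
                simp only [hT, Finset.mem_insert, Finset.mem_singleton]
                rcases hxS with rfl | rfl | rfl | rfl
                · left; rfl
                · right; left; rfl
                · right; right; rfl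
                · exact absurd rfl hx4
              have hsome : x1 ∈ T ∨ x2 ∈ T ∨ x3 ∈ T ∨ x4 ∈ T := by
                push_neg at hall
                by_cases hs1 : x1 ∈ S
                · by_cases hs2 : x2 ∈ S
                  · by_cases hs3 : x3 ∈ S
                    · exact Or.inr (Or.inr (Or.inr (hDT (hall hs1 hs2 hs3) hx4)))
                    · exact Or.inr (Or.inr (Or.inl (hDT hs3 hx3)))
                  · exact Or.inr (Or.inl (hDT hs2 hx2))
                · exact Or.inl (hDT hs1 hx1)
              have hallT : x1 ∈ T ∧ x2 ∈ T ∧ x3 ∈ T ∧ x4 ∈ T := by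
                rcases hsome with h1 | h2 | h3 | h4
                · have h2 := hstep _ _ h1 a12 hx2
                  have h3 := hstep _ _ h2 a23 hx3
                  have h4 := hstep _ _ h3 a34 hx4
                  exact ⟨h1, h2, h3, h4⟩
                · have h1 := hstep _ _ h2 a12.symm hx1
                  have h3 := hstep _ _ h2 a23 hx3
                  have h4 := hstep _ _ h3 a34 hx4
                  exact ⟨h1, h2, h3, h4⟩
                · have h2 := hstep _ _ h3 a23.symm hx2
                  have h1 := hstep _ _ h2 a12.symm hx1
                  have h4 := hstep _ _ h3 a34 hx4
                  exact ⟨h1, h2, h3, h4⟩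
                · have h3 := hstep _ _ h4 a34.symm hx3
                  have h2 := hstep _ _ h3 a23.symm hx2
                  have h1 := hstep _ _ h2 a12.symm hx1
                  exact ⟨h1, h2, h3, h4⟩
              -- four distinct elements in a 3-element set
              have hsub : ({x1, x2, x3, x4} : Finset V) ⊆ T := by
                intro z hz
                simp only [Finset.mem_insert, Finset.mem_singleton] at hz
                rcases hz with rfl | rfl | rfl | rfl
                · exact hallT.1
                · exact hallT.2.1
                · exact hallT.2.2.1
                · exact hallT.2.2.2
              have hx4card : ({x1, x2, x3, x4} : Finset V).card = 4 := by
                rw [Finset.card_insert_of_notMem (by simp [n12, n13, n14]),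
                  Finset.card_insert_of_notMem (by simp [n23, n24]),
                  Finset.card_insert_of_notMem (by simp [n34]), Finset.card_singleton]
              have hTcard : T.card ≤ 3 := by
                apply le_trans (Finset.card_insert_le _ _)
                have : ({u2, u3} : Finset V).card ≤ 2 := by
                  apply le_trans (Finset.card_insert_le _ _); simp
                omega
              have := Finset.card_le_card hsub
              omega
          · have hc1 : (insert u4 (F'.image Subtype.val)).card ≤ F'.card + 1 := by
              calc (insert u4 (F'.image Subtype.val)).card ≤ (F'.image Subtype.val).card + 1 :=
                    Finset.card_insert_le _ _
                _ ≤ F'.card + 1 := by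
                    have := Finset.card_image_le (f := Subtype.val) (s := F')
                    omega
            have hdrop := phi_drop (G := G) D ⟨u1, by simp [hD]⟩ K₀ hdeg
              (by
                intro x hx
                simp only [hD, Finset.mem_insert, Finset.mem_singleton] at hx
                rcases hx with rfl | rfl | rfl | rfl
                · exact hu1K
                · exact hu2K
                · exact hu3K
                · exact hu4K)
            have hgK : g G K₀ = csize G K₀ / 4 := by rw [g, if_neg hcyc]
            rw [hgK, hDcard] at hdrop
            have hdrop' : Phi G' + csize G K₀ / 4 ≤ Phi G + (csize G K₀ - 4) / 4 := hdrop
            have hPhi : Phi G' + 1 ≤ Phi G := by omega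
            omega
      · refine ⟨∅, ?_, Nat.zero_le _⟩
        rintro ⟨a, b, c, d, -, -, -, -, n12, n13, n14, n23, n24, n34, a12, a23, a34⟩
        exact hq ⟨a, b, c, d, n12, n13, n14, n23, n24, n34, a12, a23, a34⟩

lemma cyc_three_le (hdeg : ∀ v, G.degree v ≤ 2) {K : G.ConnectedComponent}
    (hcyc : isCyc G K) : 3 ≤ csize G K := by
  obtain ⟨v, hv⟩ : ∃ v, G.connectedComponentMk v = K := K.exists_rep
  have hdv : G.degree v = 2 := hcyc v hv
  have hcard : (G.neighborFinset v).card = 2 := by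
    rw [SimpleGraph.card_neighborFinset_eq_degree]; exact hdv
  have hvnot : v ∉ G.neighborFinset v := by
    simp [SimpleGraph.mem_neighborFinset]
  have hc3 : (insert v (G.neighborFinset v)).card = 3 := by
    rw [Finset.card_insert_of_notMem hvnot, hcard]
  rw [← hc3]
  apply le_csize
  intro x hx
  rcases Finset.mem_insert.mp hx with rfl | hx'
  · exact hv
  · have : G.Adj v x := (SimpleGraph.mem_neighborFinset _ _ _).mp hx'
    rw [← hv]
    exact (ConnectedComponent.connectedComponentMk_eq_of_adj this).symm

lemma g_le_budget (hdeg : ∀ v, G.degree v ≤ 2) (K : G.ConnectedComponent) :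
    (g G K : ℝ) ≤ 2 / 5 * (csize G K : ℝ)
      - 2 / 5 * (if (∃ u, G.connectedComponentMk u = K ∧ G.degree u ≤ 1) ∧
          Set.ncard {u | G.connectedComponentMk u = K} ≤ 3 then (csize G K : ℝ) else 0)
      - 2 / 5 * (if (∀ u, G.connectedComponentMk u = K → G.degree u = 2) ∧
          Set.ncard {u | G.connectedComponentMk u = K} = 3 then (csize G K : ℝ) else 0)
      - 3 / 20 * (if (∃ u, G.connectedComponentMk u = K ∧ G.degree u ≤ 1) ∧
          4 ≤ Set.ncard {u | G.connectedComponentMk u = K} then (csize G K : ℝ) else 0)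
      - 1 / 15 * (if (∀ u, G.connectedComponentMk u = K → G.degree u = 2) ∧
          (Set.ncard {u | G.connectedComponentMk u = K} = 4 ∨
            6 ≤ Set.ncard {u | G.connectedComponentMk u = K}) then (csize G K : ℝ) else 0) := by
  have hsz : Set.ncard {u | G.connectedComponentMk u = K} = csize G K := rfl
  rw [hsz]
  set m := csize G K with hm
  by_cases hcyc : isCyc G K
  · have hcycT : ∀ u, G.connectedComponentMk u = K → G.degree u = 2 := hcyc
    have hnopath : ¬ ∃ u, G.connectedComponentMk u = K ∧ G.degree u ≤ 1 := by
      rintro ⟨u, huK, hu1⟩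
      have := hcycT u huK
      omega
    simp only [hnopath, false_and, if_false, eq_true hcycT, true_and]
    have hm3 : 3 ≤ m := cyc_three_le hdeg hcyc
    have hgK : g G K = if m = 3 then 0 else (m + 3) / 4 := by
      rw [g, if_pos hcyc]
    by_cases h3 : m = 3
    · rw [if_pos h3, if_neg (by omega), hgK, if_pos h3, h3]
      norm_num
    · rw [if_neg h3, hgK, if_neg h3]
      by_cases h46 : m = 4 ∨ 6 ≤ m
      · rw [if_pos h46]
        by_cases h9 : 9 ≤ m
        · have hcast : (((m + 3) / 4 : ℕ) : ℝ) ≤ ((m : ℝ) + 3) / 4 := by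
            have h := Nat.cast_div_le (m := m + 3) (n := 4) (α := ℝ)
            push_cast at h
            linarith
          have h9' : (9 : ℝ) ≤ (m : ℝ) := by exact_mod_cast h9
          have : ((m : ℝ) + 3) / 4 ≤ (m : ℝ) / 3 := by linarith
          linarith
        · have hm8 : m = 4 ∨ m = 6 ∨ m = 7 ∨ m = 8 := by omega
          rcases hm8 with h' | h' | h' | h' <;> rw [h'] <;> norm_num
      · have h5 : m = 5 := by omega
        rw [if_neg h46, h5]
        norm_num
  · have hcycF : ¬ ∀ u, G.connectedComponentMk u = K → G.degree u = 2 := hcyc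
    have hpath : ∃ u, G.connectedComponentMk u = K ∧ G.degree u ≤ 1 := by
      push_neg at hcycF
      obtain ⟨u, hu, hne⟩ := hcycF
      exact ⟨u, hu, by have := hdeg u; omega⟩
    have hcycF : ¬ ∀ u, G.connectedComponentMk u = K → G.degree u = 2 := hcyc
    simp only [eq_true hpath, hcycF, false_and, if_false, true_and]
    have hgK : g G K = m / 4 := by rw [g, if_neg hcyc]
    by_cases h3 : m ≤ 3
    · rw [if_pos h3, if_neg (by omega), hgK]
      have h0 : m / 4 = 0 := by omega
      rw [h0]
      have hm3 : (m : ℝ) ≤ 3 := by exact_mod_cast h3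
      push_cast
      linarith
    · rw [if_neg h3, if_pos (by omega), hgK]
      have hcast : ((m / 4 : ℕ) : ℝ) ≤ (m : ℝ) / 4 := Nat.cast_div_le
      linarith

lemma phi_le (hdeg : ∀ v, G.degree v ≤ 2) :
    (Phi G : ℝ) ≤ 2 / 5 * Fintype.card V
      - 2 / 5 * ((Set.ncard {v : V |
          (∃ u, G.connectedComponentMk u = G.connectedComponentMk v ∧ G.degree u ≤ 1) ∧
          Set.ncard {u | G.connectedComponentMk u = G.connectedComponentMk v} ≤ 3} : ℝ)
        + (Set.ncard {v : V |
          (∀ u, G.connectedComponentMk u = G.connectedComponentMk v → G.degree u = 2) ∧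
          Set.ncard {u | G.connectedComponentMk u = G.connectedComponentMk v} = 3} : ℝ))
      - 3 / 20 * (Set.ncard {v : V |
          (∃ u, G.connectedComponentMk u = G.connectedComponentMk v ∧ G.degree u ≤ 1) ∧
          4 ≤ Set.ncard {u | G.connectedComponentMk u = G.connectedComponentMk v}} : ℝ)
      - 1 / 15 * (Set.ncard {v : V |
          (∀ u, G.connectedComponentMk u = G.connectedComponentMk v → G.degree u = 2) ∧
          (Set.ncard {u | G.connectedComponentMk u = G.connectedComponentMk v} = 4 ∨
            6 ≤ Set.ncard {u | G.connectedComponentMk u = G.connectedComponentMk v})} : ℝ) := by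
  have e1 := ncard_eq_sum (G := G) (fun K =>
    (∃ u, G.connectedComponentMk u = K ∧ G.degree u ≤ 1) ∧
      Set.ncard {u | G.connectedComponentMk u = K} ≤ 3)
  have e2 := ncard_eq_sum (G := G) (fun K =>
    (∀ u, G.connectedComponentMk u = K → G.degree u = 2) ∧
      Set.ncard {u | G.connectedComponentMk u = K} = 3)
  have e3 := ncard_eq_sum (G := G) (fun K =>
    (∃ u, G.connectedComponentMk u = K ∧ G.degree u ≤ 1) ∧
      4 ≤ Set.ncard {u | G.connectedComponentMk u = K})
  have e4 := ncard_eq_sum (G := G) (fun K =>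
    (∀ u, G.connectedComponentMk u = K → G.degree u = 2) ∧
      (Set.ncard {u | G.connectedComponentMk u = K} = 4 ∨
        6 ≤ Set.ncard {u | G.connectedComponentMk u = K}))
  rw [e1, e2, e3, e4, ← sum_csize (G := G), Phi]
  push_cast
  rw [← Finset.sum_add_distrib]
  rw [Finset.mul_sum, Finset.mul_sum, Finset.mul_sum, Finset.mul_sum]
  rw [← Finset.sum_sub_distrib, ← Finset.sum_sub_distrib, ← Finset.sum_sub_distrib]
  apply Finset.sum_le_sum
  intro K _
  have := g_le_budget hdeg K
  exact this.trans_eq (by ring)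

end PVC

/-- For a graph `H` of maximum degree at most `2` (so each component is a
path or a cycle; a component is a cycle iff all its vertices have degree `2`):
`ψ₄(H) ≤ (2/5)n - (2/5)(p₃↓ + c₃) - (3/20)p₄↑ - (1/15)c₄,₆↑`, where `p₃↓`
(resp. `p₄↑`) is the number of vertices in path components of order at most
`3` (resp. at least `4`), `c₃` the number of vertices in `3`-cycle
components, and `c₄,₆↑` the number of vertices in cycle components of order
exactly `4` or at least `6`. -/
theorem stmt_15 {W : Type*} [Fintype W] (H : SimpleGraph W) [DecidableRel H.Adj]
    (hdeg : ∀ v, H.degree v ≤ 2)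
    (p3 p4 c3 c46 : ℕ)
    (hp3 : p3 = Set.ncard {v : W |
      (∃ u, H.connectedComponentMk u = H.connectedComponentMk v ∧ H.degree u ≤ 1) ∧
      Set.ncard {u | H.connectedComponentMk u = H.connectedComponentMk v} ≤ 3})
    (hp4 : p4 = Set.ncard {v : W |
      (∃ u, H.connectedComponentMk u = H.connectedComponentMk v ∧ H.degree u ≤ 1) ∧
      4 ≤ Set.ncard {u | H.connectedComponentMk u = H.connectedComponentMk v}})
    (hc3 : c3 = Set.ncard {v : W |
      (∀ u, H.connectedComponentMk u = H.connectedComponentMk v → H.degree u = 2) ∧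
      Set.ncard {u | H.connectedComponentMk u = H.connectedComponentMk v} = 3})
    (hc46 : c46 = Set.ncard {v : W |
      (∀ u, H.connectedComponentMk u = H.connectedComponentMk v → H.degree u = 2) ∧
      (Set.ncard {u | H.connectedComponentMk u = H.connectedComponentMk v} = 4 ∨
        6 ≤ Set.ncard {u | H.connectedComponentMk u = H.connectedComponentMk v})}) :
    (psi H 4 : ℝ) ≤ 2 / 5 * Fintype.card W - 2 / 5 * ((p3 : ℝ) + c3)
      - 3 / 20 * p4 - 1 / 15 * c46 := by
  classical
  obtain ⟨F, hF, hFcard⟩ := PVC.exists_cover (Fintype.card W) H le_rfl hdeg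
  have hpvc : IsPathVertexCover H 4 F := by
    intro hpath
    obtain ⟨a, b, c, d, n12, n13, n14, n23, n24, n34, a12, a23, a34⟩ :=
      PVC.quad_of_hasPath hpath
    refine hF ⟨a.val, b.val, c.val, d.val, ?_, ?_, ?_, ?_,
      fun h => n12 (Subtype.ext h), fun h => n13 (Subtype.ext h),
      fun h => n14 (Subtype.ext h), fun h => n23 (Subtype.ext h),
      fun h => n24 (Subtype.ext h), fun h => n34 (Subtype.ext h),
      by simpa using a12, by simpa using a23, by simpa using a34⟩
    · have h := a.prop
      simp only [Set.mem_compl_iff, Finset.mem_coe] at h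
      exact h
    · have h := b.prop
      simp only [Set.mem_compl_iff, Finset.mem_coe] at h
      exact h
    · have h := c.prop
      simp only [Set.mem_compl_iff, Finset.mem_coe] at h
      exact h
    · have h := d.prop
      simp only [Set.mem_compl_iff, Finset.mem_coe] at h
      exact h
  have hpsi : psi H 4 ≤ F.card := Nat.sInf_le ⟨F, hpvc, rfl⟩
  have h1 : (psi H 4 : ℝ) ≤ (PVC.Phi H : ℝ) := by exact_mod_cast le_trans hpsi hFcard
  have h2 := PVC.phi_le (G := H) hdeg
  rw [hp3, hp4, hc3, hc46]
  push_cast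
  linarith
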